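/- Greedy approximation guarantee: Let g : 2^V → ℝ be a monotone submodular set function on a finite ground set V with g(∅) = 0, and let k ≤ |V|. Let S* be the set produced by the greedy algorithm that starts from the empty set and, for k iterations, adds the element with maximal marginal gain. Then g(S*) ≥ (1 − 1/e)·max{g(S) : S ⊆ V, |S| = k}. -/

import Mathlib

/-- Nemhauser–Wolsey–Fisher greedy approximation guarantee: for a monotone
submodular `g` with `g ∅ = 0` and budget `k ≤ |V|`, the set `S k` produced by
`k` steps of the greedy algorithm satisfies
`g (S k) ≥ (1 - 1/e) · max {g T : |T| = k}`. -/
theorem greedy_approximation_guarantee {V : Type*} [Fintype V] [DecidableEq V]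
    (g : Finset V → ℝ)
    (hmono : ∀ A B : Finset V, A ⊆ B → g A ≤ g B)
    (hsub : ∀ A B : Finset V, g (A ∪ B) + g (A ∩ B) ≤ g A + g B)
    (h0 : g ∅ = 0)
    (k : ℕ) (hk : k ≤ Fintype.card V)
    (S : ℕ → Finset V) (hS0 : S 0 = ∅)
    (hgreedy : ∀ i < k, ∃ x ∉ S i,
      S (i + 1) = insert x (S i) ∧
      ∀ y ∉ S i, g (insert y (S i)) ≤ g (insert x (S i))) :
    ∀ T : Finset V, T.card = k →
      (1 - 1 / Real.exp 1) * g T ≤ g (S k) := by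
  intro T hT
  rcases Nat.eq_zero_or_pos k with hk0 | hkpos
  · subst hk0
    rw [Finset.card_eq_zero] at hT
    subst hT
    rw [hS0, h0, mul_zero]
  have hOPT0 : 0 ≤ g T := by
    have := hmono ∅ T (Finset.empty_subset T)
    linarith [h0 ▸ this]
  have hk1 : (1:ℝ) ≤ (k:ℝ) := by exact_mod_cast hkpos
  have hkpos' : (0:ℝ) < (k:ℝ) := by linarith
  have hfac : (0:ℝ) ≤ 1 - 1/(k:ℝ) := by
    have : 1/(k:ℝ) ≤ 1 := by
      rw [div_le_one hkpos']; exact hk1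
    linarith
  -- telescoping submodularity bound
  have key : ∀ (A T' : Finset V),
      g (A ∪ T') ≤ g A + ∑ y ∈ T', (g (insert y A) - g A) := by
    intro A T'
    induction T' using Finset.induction_on with
    | empty => simp
    | @insert a s ha ih =>
      rw [Finset.sum_insert ha]
      have h1 := hsub (insert a A) (A ∪ s)
      have h2 : A ⊆ (insert a A) ∩ (A ∪ s) := by
        intro x hx; simp [hx]
      have h3 : g A ≤ g ((insert a A) ∩ (A ∪ s)) := hmono _ _ h2
      have h4 : A ∪ insert a s = (insert a A) ∪ (A ∪ s) := by
        ext x; simp only [Finset.mem_union, Finset.mem_insert]; tauto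
      rw [h4]
      linarith
  -- one-step contraction
  have step : ∀ i < k, g T - g (S (i+1)) ≤ (1 - 1/(k:ℝ)) * (g T - g (S i)) := by
    intro i hi
    obtain ⟨x, hx, hSi1, hmax⟩ := hgreedy i hi
    set δ := g (insert x (S i)) - g (S i) with hδ
    have hδ0 : 0 ≤ δ := sub_nonneg.2 (hmono _ _ (Finset.subset_insert _ _))
    have hsum := key (S i) T
    have hterm : ∀ y ∈ T, g (insert y (S i)) - g (S i) ≤ δ := by
      intro y _
      by_cases hy : y ∈ S i
      · rw [Finset.insert_eq_self.2 hy]; simpa using hδ0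
      · exact sub_le_sub_right (hmax y hy) _
    have hsum2 : ∑ y ∈ T, (g (insert y (S i)) - g (S i)) ≤ (k:ℝ) * δ := by
      calc ∑ y ∈ T, (g (insert y (S i)) - g (S i)) ≤ ∑ _y ∈ T, δ :=
            Finset.sum_le_sum hterm
        _ = (T.card : ℝ) * δ := by rw [Finset.sum_const, nsmul_eq_mul]
        _ = (k:ℝ) * δ := by rw [hT]
    have hgT : g T ≤ g (S i ∪ T) := hmono _ _ Finset.subset_union_right
    have hmain : g T ≤ g (S i) + (k:ℝ) * δ := by linarith
    rw [hSi1]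
    have hdiv : (g T - g (S i)) / (k:ℝ) ≤ δ := by
      rw [div_le_iff₀ hkpos']
      nlinarith
    have : g (insert x (S i)) = g (S i) + δ := by rw [hδ]; ring
    rw [this]
    have hexp : (1 - 1/(k:ℝ)) * (g T - g (S i))
        = (g T - g (S i)) - (g T - g (S i)) / (k:ℝ) := by
      field_simp
    rw [hexp]
    linarith
  -- iterate
  have main : ∀ i ≤ k, g T - g (S i) ≤ (1 - 1/(k:ℝ))^i * g T := by
    intro i hi
    induction i with
    | zero => simp [hS0, h0]
    | succ n ih =>
      have hnk : n < k := hi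
      have h1 := step n hnk
      have h2 := ih (le_of_lt hnk)
      calc g T - g (S (n+1)) ≤ (1 - 1/(k:ℝ)) * (g T - g (S n)) := h1
        _ ≤ (1 - 1/(k:ℝ)) * ((1 - 1/(k:ℝ))^n * g T) :=
            mul_le_mul_of_nonneg_left h2 hfac
        _ = (1 - 1/(k:ℝ))^(n+1) * g T := by ring
  have hmk := main k le_rfl
  have hpow : (1 - 1/(k:ℝ))^k ≤ 1 / Real.exp 1 := by
    have h1 : (1 - 1/(k:ℝ)) ≤ Real.exp (-(1/(k:ℝ))) := by
      have := Real.add_one_le_exp (-(1/(k:ℝ)))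
      linarith
    calc (1 - 1/(k:ℝ))^k ≤ (Real.exp (-(1/(k:ℝ))))^k :=
          pow_le_pow_left₀ hfac h1 k
      _ = Real.exp ((k:ℝ) * (-(1/(k:ℝ)))) := by
          rw [← Real.exp_nat_mul]
      _ = Real.exp (-1) := by
          congr 1
          field_simp
      _ = 1 / Real.exp 1 := by rw [Real.exp_neg, one_div]
  have hfinal : (1 - 1/(k:ℝ))^k * g T ≤ (1 / Real.exp 1) * g T :=
    mul_le_mul_of_nonneg_right hpow hOPT0
  linarith
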